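/- Assume τ/ε = 1/√n. Let ψ : ℤⁿ × ℤ → ℂ^N with ψ^t ∈ ℓ²(ℤⁿ) for all t satisfy (ψ_X^{t+1} + ψ_X^{t−1})(1 + τ² B_X(|ψ_X^{t+1}|², |ψ_X^{t−1}|²)) = (1/n) ∑_{j=1}^n (ψ_{X+e_j}^t + ψ_{X−e_j}^t), where each B_X takes real values. Then the discrete charge Q^t = (i εⁿ/(4τ)) ∑_X ∑_{j=1}^n [ conj(ψ_{X+e_j}^t)·ψ_X^{t+1} + conj(ψ_{X−e_j}^t)·ψ_X^{t+1} − conj(ψ_X^{t+1})·ψ_{X+e_j}^t − conj(ψ_X^{t+1})·ψ_{X−e_j}^t ] satisfies Q^t = Q^{t−1} for all t ∈ ℤ. -/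

import Mathlib

/-- Translation equivalence on `Fin n → ℤ`. -/
def transEquiv {n : ℕ} (v : Fin n → ℤ) : (Fin n → ℤ) ≃ (Fin n → ℤ) where
  toFun X := X + v
  invFun X := X - v
  left_inv X := add_sub_cancel_right X v
  right_inv X := sub_add_cancel X v

lemma aux_summ_inner {n N : ℕ} (f g : (Fin n → ℤ) → EuclideanSpace ℂ (Fin N))
    (hf : Summable fun X => ‖f X‖ ^ 2) (hg : Summable fun X => ‖g X‖ ^ 2) :
    Summable fun X => (inner ℂ (f X) (g X) : ℂ) := by
  refine Summable.of_norm (Summable.of_nonneg_of_le (fun X => norm_nonneg _) (fun X => ?_)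
    ((hf.add hg).div_const 2))
  calc ‖(inner ℂ (f X) (g X) : ℂ)‖ ≤ ‖f X‖ * ‖g X‖ := norm_inner_le_norm _ _
    _ ≤ (‖f X‖ ^ 2 + ‖g X‖ ^ 2) / 2 := by nlinarith [sq_nonneg (‖f X‖ - ‖g X‖)]

lemma aux_shift_sq {n N : ℕ} (f : (Fin n → ℤ) → EuclideanSpace ℂ (Fin N))
    (hf : Summable fun X => ‖f X‖ ^ 2) (v : Fin n → ℤ) :
    Summable fun X => ‖f (X + v)‖ ^ 2 := by
  have h : ((fun Y : Fin n → ℤ => ‖f Y‖ ^ 2) ∘ fun X : Fin n → ℤ => X + v)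
      = fun X : Fin n → ℤ => ‖f (X + v)‖ ^ 2 := rfl
  exact h ▸ hf.comp_injective (add_left_injective v)

lemma aux_alg1 {N : ℕ} (r : ℝ) (a b S : EuclideanSpace ℂ (Fin N)) (h : S = r • (a + b)) :
    (inner ℂ S a : ℂ) - inner ℂ a S = (r : ℂ) * ((inner ℂ b a : ℂ) - inner ℂ a b) := by
  subst h
  rw [← algebraMap_smul ℂ r, Complex.coe_algebraMap]
  simp only [inner_smul_left, inner_smul_right, inner_add_left, inner_add_right,
    Complex.conj_ofReal]
  ring

lemma aux_alg2 {N : ℕ} (r : ℝ) (a b S : EuclideanSpace ℂ (Fin N)) (h : S = r • (a + b)) :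
    (inner ℂ b S : ℂ) - inner ℂ S b = (r : ℂ) * ((inner ℂ b a : ℂ) - inner ℂ a b) := by
  subst h
  rw [← algebraMap_smul ℂ r, Complex.coe_algebraMap]
  simp only [inner_smul_left, inner_smul_right, inner_add_left, inner_add_right,
    Complex.conj_ofReal]
  ring

/-- The two pieces of the summand for `Q^{t-1}`, before shifting. -/
noncomputable def Pfun {n N : ℕ} (b m : (Fin n → ℤ) → EuclideanSpace ℂ (Fin N)) (j : Fin n) :
    (Fin n → ℤ) → ℂ := fun X =>
  (inner ℂ (b (X + Pi.single j 1)) (m X) : ℂ) - inner ℂ (m X) (b (X + Pi.single j 1))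

noncomputable def Rfun {n N : ℕ} (b m : (Fin n → ℤ) → EuclideanSpace ℂ (Fin N)) (j : Fin n) :
    (Fin n → ℤ) → ℂ := fun X =>
  (inner ℂ (b (X - Pi.single j 1)) (m X) : ℂ) - inner ℂ (m X) (b (X - Pi.single j 1))

/-- The two pieces after shifting the summation index. -/
noncomputable def Pfun' {n N : ℕ} (b m : (Fin n → ℤ) → EuclideanSpace ℂ (Fin N)) (j : Fin n) :
    (Fin n → ℤ) → ℂ := fun Y =>
  (inner ℂ (b Y) (m (Y - Pi.single j 1)) : ℂ) - inner ℂ (m (Y - Pi.single j 1)) (b Y)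

noncomputable def Rfun' {n N : ℕ} (b m : (Fin n → ℤ) → EuclideanSpace ℂ (Fin N)) (j : Fin n) :
    (Fin n → ℤ) → ℂ := fun Y =>
  (inner ℂ (b Y) (m (Y + Pi.single j 1)) : ℂ) - inner ℂ (m (Y + Pi.single j 1)) (b Y)

lemma aux_main {n N : ℕ} (b m : (Fin n → ℤ) → EuclideanSpace ℂ (Fin N))
    (hb : Summable fun X => ‖b X‖ ^ 2) (hm : Summable fun X => ‖m X‖ ^ 2)
    (F : (Fin n → ℤ) → ℂ)
    (hpt : ∀ Y : Fin n → ℤ,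
      ((inner ℂ (b Y) (∑ j : Fin n, (m (Y + Pi.single j 1) + m (Y - Pi.single j 1))) : ℂ)
        - inner ℂ (∑ j : Fin n, (m (Y + Pi.single j 1) + m (Y - Pi.single j 1))) (b Y)) = F Y) :
    (∑' X : Fin n → ℤ, ∑ j : Fin n,
        ((inner ℂ (b (X + Pi.single j 1)) (m X) : ℂ)
          + (inner ℂ (b (X - Pi.single j 1)) (m X) : ℂ)
          - (inner ℂ (m X) (b (X + Pi.single j 1)) : ℂ)
          - (inner ℂ (m X) (b (X - Pi.single j 1)) : ℂ)))
      = ∑' X : Fin n → ℤ, F X := by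
  have hbp : ∀ v : Fin n → ℤ, Summable fun X => ‖b (X + v)‖ ^ 2 := aux_shift_sq b hb
  have hbm : ∀ v : Fin n → ℤ, Summable fun X => ‖b (X - v)‖ ^ 2 := fun v =>
    (hbp (-v)).congr fun X => by rw [← sub_eq_add_neg]
  have hmp : ∀ v : Fin n → ℤ, Summable fun X => ‖m (X + v)‖ ^ 2 := aux_shift_sq m hm
  have hmm : ∀ v : Fin n → ℤ, Summable fun X => ‖m (X - v)‖ ^ 2 := fun v =>
    (hmp (-v)).congr fun X => by rw [← sub_eq_add_neg]
  have hPs : ∀ j : Fin n, Summable (Pfun b m j) := fun j =>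
    (aux_summ_inner _ _ (hbp _) hm).sub (aux_summ_inner _ _ hm (hbp _))
  have hRs : ∀ j : Fin n, Summable (Rfun b m j) := fun j =>
    (aux_summ_inner _ _ (hbm _) hm).sub (aux_summ_inner _ _ hm (hbm _))
  have hPs' : ∀ j : Fin n, Summable (Pfun' b m j) := fun j =>
    (aux_summ_inner _ _ hb (hmm _)).sub (aux_summ_inner _ _ (hmm _) hb)
  have hRs' : ∀ j : Fin n, Summable (Rfun' b m j) := fun j =>
    (aux_summ_inner _ _ hb (hmp _)).sub (aux_summ_inner _ _ (hmp _) hb)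
  have shiftP : ∀ j : Fin n, ∑' X, Pfun b m j X = ∑' Y, Pfun' b m j Y := by
    intro j
    have h : ∀ X : Fin n → ℤ, Pfun b m j X = Pfun' b m j (X + Pi.single j 1) := by
      intro X
      simp only [Pfun, Pfun', add_sub_cancel_right]
    rw [tsum_congr h]
    exact (transEquiv (Pi.single j 1)).tsum_eq (Pfun' b m j)
  have shiftR : ∀ j : Fin n, ∑' X, Rfun b m j X = ∑' Y, Rfun' b m j Y := by
    intro j
    have h : ∀ X : Fin n → ℤ, Rfun b m j X = Rfun' b m j (X - Pi.single j 1) := by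
      intro X
      simp only [Rfun, Rfun', sub_add_cancel]
    rw [tsum_congr h]
    exact (transEquiv (Pi.single j 1)).symm.tsum_eq (Rfun' b m j)
  calc (∑' X : Fin n → ℤ, ∑ j : Fin n,
        ((inner ℂ (b (X + Pi.single j 1)) (m X) : ℂ)
          + (inner ℂ (b (X - Pi.single j 1)) (m X) : ℂ)
          - (inner ℂ (m X) (b (X + Pi.single j 1)) : ℂ)
          - (inner ℂ (m X) (b (X - Pi.single j 1)) : ℂ)))
      = ∑' X : Fin n → ℤ, ∑ j : Fin n, (Pfun b m j X + Rfun b m j X) := by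
        refine tsum_congr fun X => Finset.sum_congr rfl fun j _ => ?_
        simp only [Pfun, Rfun]
        ring
    _ = ∑ j : Fin n, ∑' X : Fin n → ℤ, (Pfun b m j X + Rfun b m j X) :=
        Summable.tsum_finsetSum fun j _ => (hPs j).add (hRs j)
    _ = ∑ j : Fin n, ∑' Y : Fin n → ℤ, (Pfun' b m j Y + Rfun' b m j Y) := by
        refine Finset.sum_congr rfl fun j _ => ?_
        rw [Summable.tsum_add (hPs j) (hRs j), shiftP j, shiftR j, ← Summable.tsum_add (hPs' j) (hRs' j)]
    _ = ∑' Y : Fin n → ℤ, ∑ j : Fin n, (Pfun' b m j Y + Rfun' b m j Y) :=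
        (Summable.tsum_finsetSum fun j _ => (hPs' j).add (hRs' j)).symm
    _ = ∑' Y : Fin n → ℤ, F Y := by
        refine tsum_congr fun Y => ?_
        rw [← hpt Y]
        simp only [Pfun', Rfun', inner_sum, sum_inner, inner_add_left, inner_add_right,
          Finset.sum_sub_distrib, Finset.sum_add_distrib]
        ring

theorem stmt14 (n N : ℕ) (hn : 1 ≤ n) (hN : 1 ≤ N)
    (τ ε : ℝ) (hτ : 0 < τ) (hε : 0 < ε)
    (hratio : τ / ε = 1 / Real.sqrt n)
    (B : (Fin n → ℤ) → ℝ → ℝ → ℝ)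
    (ψ : ℤ → (Fin n → ℤ) → EuclideanSpace ℂ (Fin N))
    (hl2 : ∀ t : ℤ, Summable fun X : Fin n → ℤ => ‖ψ t X‖ ^ 2)
    (hscheme : ∀ (t : ℤ) (X : Fin n → ℤ),
      (1 + τ ^ 2 * B X (‖ψ (t + 1) X‖ ^ 2) (‖ψ (t - 1) X‖ ^ 2))
          • (ψ (t + 1) X + ψ (t - 1) X)
        = ((n : ℝ)⁻¹) • ∑ j : Fin n,
            (ψ t (X + Pi.single j 1) + ψ t (X - Pi.single j 1)))
    (Q : ℤ → ℂ)
    (hQ : ∀ t : ℤ, Q t = Complex.I * (ε ^ n / (4 * τ)) *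
      ∑' X : Fin n → ℤ, ∑ j : Fin n,
        ((inner ℂ (ψ t (X + Pi.single j 1)) (ψ (t + 1) X) : ℂ)
          + (inner ℂ (ψ t (X - Pi.single j 1)) (ψ (t + 1) X) : ℂ)
          - (inner ℂ (ψ (t + 1) X) (ψ t (X + Pi.single j 1)) : ℂ)
          - (inner ℂ (ψ (t + 1) X) (ψ t (X - Pi.single j 1)) : ℂ))) :
    ∀ t : ℤ, Q t = Q (t - 1) := by
  intro t
  have hn0 : (n : ℝ) ≠ 0 := Nat.cast_ne_zero.mpr (by omega)
  have ht1 : t - 1 + 1 = t := by ring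
  set r : (Fin n → ℤ) → ℝ := fun X =>
    (n : ℝ) * (1 + τ ^ 2 * B X (‖ψ (t + 1) X‖ ^ 2) (‖ψ (t - 1) X‖ ^ 2)) with hr
  have hS : ∀ X : Fin n → ℤ,
      ∑ j : Fin n, (ψ t (X + Pi.single j 1) + ψ t (X - Pi.single j 1))
        = r X • (ψ (t + 1) X + ψ (t - 1) X) := by
    intro X
    have h := hscheme t X
    calc ∑ j : Fin n, (ψ t (X + Pi.single j 1) + ψ t (X - Pi.single j 1))
        = (n : ℝ) • ((n : ℝ)⁻¹ •
            ∑ j : Fin n, (ψ t (X + Pi.single j 1) + ψ t (X - Pi.single j 1))) := by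
          rw [smul_smul, mul_inv_cancel₀ hn0, one_smul]
      _ = (n : ℝ) • ((1 + τ ^ 2 * B X (‖ψ (t + 1) X‖ ^ 2) (‖ψ (t - 1) X‖ ^ 2))
            • (ψ (t + 1) X + ψ (t - 1) X)) := by rw [← h]
      _ = r X • (ψ (t + 1) X + ψ (t - 1) X) := by rw [smul_smul, hr]
  set F : (Fin n → ℤ) → ℂ := fun X => (r X : ℂ) *
    ((inner ℂ (ψ (t - 1) X) (ψ (t + 1) X) : ℂ) - (inner ℂ (ψ (t + 1) X) (ψ (t - 1) X) : ℂ))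
    with hF
  have hQt : Q t = Complex.I * (ε ^ n / (4 * τ)) * ∑' X : Fin n → ℤ, F X := by
    rw [hQ t]
    congr 1
    refine tsum_congr fun X => ?_
    have hsplit : ∑ j : Fin n,
        ((inner ℂ (ψ t (X + Pi.single j 1)) (ψ (t + 1) X) : ℂ)
          + (inner ℂ (ψ t (X - Pi.single j 1)) (ψ (t + 1) X) : ℂ)
          - (inner ℂ (ψ (t + 1) X) (ψ t (X + Pi.single j 1)) : ℂ)
          - (inner ℂ (ψ (t + 1) X) (ψ t (X - Pi.single j 1)) : ℂ))
        = (inner ℂ (∑ j : Fin n, (ψ t (X + Pi.single j 1) + ψ t (X - Pi.single j 1)))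
              (ψ (t + 1) X) : ℂ)
          - inner ℂ (ψ (t + 1) X)
              (∑ j : Fin n, (ψ t (X + Pi.single j 1) + ψ t (X - Pi.single j 1))) := by
      simp only [sum_inner, inner_sum, inner_add_left, inner_add_right,
        Finset.sum_sub_distrib, Finset.sum_add_distrib]
      ring
    rw [hsplit, hF]
    exact aux_alg1 (r X) _ _ _ (hS X)
  have hQt1 : Q (t - 1) = Complex.I * (ε ^ n / (4 * τ)) * ∑' X : Fin n → ℤ, F X := by
    rw [hQ (t - 1), ht1]
    congr 1
    refine aux_main (ψ (t - 1)) (ψ t) (hl2 (t - 1)) (hl2 t) F fun Y => ?_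
    rw [hS Y, hF]
    exact aux_alg2 (r Y) _ _ _ rfl
  rw [hQt, hQt1]
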